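/- arXiv:1704.06674 — 4 statements merged into one kernel-verified Lean document; each statement's English description precedes it below -/
import Mathlib

section
/- Let x ∈ {0,1} and z : B × {1,…,n} → {0,1} satisfy the GUB constraints ∑_{l=1}^{n} z_{b,l} = 1 for every b ∈ B and the discrete big-M SIR constraint ∑_{b ∈ B∖{β}} a_b ∑_{l=1}^{n} P_l · z_{b,l} − a_β ∑_{l=1}^{n} P_l · z_{β,l} + M·x ≤ δ + M. Then for every nonempty subset Γ = {b_1,…,b_k} ⊆ B∖{β}, every serving level λ ∈ {1,…,n}, and every k-tuple of levels (q_1,…,q_k) ∈ {1,…,n}^k satisfying the cover condition ∑_{i=1}^{k} a_{b_i} · P_{q_i} − a_β · P_λ > δ, the GUB cover inequality x + ∑_{l=1}^{λ} z_{β,l} + ∑_{i=1}^{k} ∑_{j=q_i}^{n} z_{b_i,j} ≤ k + 1 holds. -/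
open Finset

/-- **GUB cover inequalities are valid for the discrete big-M SIR constraint.**
`B` is a finite set of transmitters with designated server `β`; power levels are
`Fin n` with nondecreasing nonnegative power values `P` (with `P 1 = 0`);
fading coefficients `a b > 0`.  Any 0-1 point `(x, z)` satisfying the GUB
constraints and the discrete big-M SIR constraint satisfies every GUB cover
inequality. -/
theorem gub_cover_inequality_valid
    {B : Type*} [Fintype B] [DecidableEq B] (β : B) (n : ℕ) (hn : 0 < n)
    (P : Fin n → ℝ) (hP1 : P ⟨0, hn⟩ = 0) (hPmono : Monotone P)
    (a : B → ℝ) (ha : ∀ b, 0 < a b) (δ M : ℝ)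
    (x : ℝ) (hx : x = 0 ∨ x = 1)
    (z : B → Fin n → ℝ) (hz01 : ∀ b l, z b l = 0 ∨ z b l = 1)
    (hgub : ∀ b, ∑ l, z b l = 1)
    (hSIR : ∑ b ∈ Finset.univ.erase β, a b * ∑ l, P l * z b l
              - a β * ∑ l, P l * z β l + M * x ≤ δ + M)
    (Γ : Finset B) (hΓne : Γ.Nonempty) (hΓβ : β ∉ Γ)
    (lam : Fin n) (q : B → Fin n)
    (hcover : ∑ b ∈ Γ, a b * P (q b) - a β * P lam > δ) :
    x + ∑ l ∈ Finset.Iic lam, z β l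
      + ∑ b ∈ Γ, ∑ j ∈ Finset.Ici (q b), z b j ≤ Γ.card + 1 := by
  have hz0 : ∀ b l, 0 ≤ z b l := by
    intro b l; rcases hz01 b l with h | h <;> simp [h]
  have hPnn : ∀ l, 0 ≤ P l := by
    intro l
    have : P ⟨0, hn⟩ ≤ P l := hPmono (by simp [Fin.le_def])
    linarith [hP1 ▸ this]
  -- each transmitter selects exactly one level
  have hex : ∀ b, ∃ l₀, z b l₀ = 1 ∧ ∀ l, l ≠ l₀ → z b l = 0 := by
    intro b
    obtain ⟨l₀, hl₀⟩ : ∃ l, z b l = 1 := by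
      by_contra h
      push_neg at h
      have : ∑ l, z b l = 0 :=
        Finset.sum_eq_zero fun l _ => (hz01 b l).resolve_right (h l)
      rw [hgub b] at this; norm_num at this
    refine ⟨l₀, hl₀, fun l hl => ?_⟩
    by_contra hne
    have h1 : z b l = 1 := (hz01 b l).resolve_left hne
    have hpair : ∑ j ∈ ({l₀, l} : Finset (Fin n)), z b j = z b l₀ + z b l :=
      Finset.sum_pair (Ne.symm hl)
    have hle : ∑ j ∈ ({l₀, l} : Finset (Fin n)), z b j ≤ ∑ j, z b j :=
      Finset.sum_le_sum_of_subset_of_nonneg (Finset.subset_univ _)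
        (fun j _ _ => hz0 b j)
    rw [hpair, hgub b, hl₀, h1] at hle
    linarith
  choose ℓ hℓ1 hℓ0 using hex
  have hsumP : ∀ b, ∑ l, P l * z b l = P (ℓ b) := by
    intro b
    rw [Finset.sum_eq_single (ℓ b)]
    · rw [hℓ1 b]; ring
    · intro l _ hl; rw [hℓ0 b l hl]; ring
    · intro h; exact absurd (Finset.mem_univ _) h
  have hS : ∀ (b : B) (s : Finset (Fin n)),
      ∑ l ∈ s, z b l = if ℓ b ∈ s then 1 else 0 := by
    intro b s
    split
    · next h =>
      rw [Finset.sum_eq_single_of_mem (ℓ b) h (fun l _ hl => hℓ0 b l hl), hℓ1 b]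
    · next h =>
      exact Finset.sum_eq_zero fun l hl => hℓ0 b l (fun he => h (he ▸ hl))
  rw [hS]
  have hSrw : ∀ b ∈ Γ, ∑ j ∈ Finset.Ici (q b), z b j
      = if ℓ b ∈ Finset.Ici (q b) then 1 else 0 := fun b _ => hS b _
  rw [Finset.sum_congr rfl hSrw]
  have hsum_le : ∑ b ∈ Γ, (if ℓ b ∈ Finset.Ici (q b) then (1:ℝ) else 0) ≤ Γ.card := by
    calc ∑ b ∈ Γ, (if ℓ b ∈ Finset.Ici (q b) then (1:ℝ) else 0)
        ≤ ∑ _b ∈ Γ, (1:ℝ) := Finset.sum_le_sum fun b _ => by split <;> norm_num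
      _ = Γ.card := by simp
  rcases hx with h0 | h1
  · subst h0
    have : (if ℓ β ∈ Finset.Iic lam then (1:ℝ) else 0) ≤ 1 := by split <;> norm_num
    linarith
  · subst h1
    by_cases hβc : ℓ β ∈ Finset.Iic lam
    · by_cases hall : ∀ b ∈ Γ, ℓ b ∈ Finset.Ici (q b)
      · -- contradiction with SIR constraint
        exfalso
        have hSIR' : ∑ b ∈ Finset.univ.erase β, a b * P (ℓ b) - a β * P (ℓ β) ≤ δ := by
          have := hSIR
          simp only [hsumP] at this
          linarith
        have h1 : ∑ b ∈ Γ, a b * P (q b) ≤ ∑ b ∈ Γ, a b * P (ℓ b) :=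
          Finset.sum_le_sum fun b hb =>
            mul_le_mul_of_nonneg_left
              (hPmono (Finset.mem_Ici.mp (hall b hb))) (ha b).le
        have h2 : ∑ b ∈ Γ, a b * P (ℓ b) ≤ ∑ b ∈ Finset.univ.erase β, a b * P (ℓ b) :=
          Finset.sum_le_sum_of_subset_of_nonneg
            (fun b hb => Finset.mem_erase.mpr ⟨fun he => hΓβ (he ▸ hb), Finset.mem_univ _⟩)
            (fun b _ _ => mul_nonneg (ha b).le (hPnn _))
        have h3 : a β * P (ℓ β) ≤ a β * P lam :=
          mul_le_mul_of_nonneg_left (hPmono (Finset.mem_Iic.mp hβc)) (ha β).le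
        linarith
      · push_neg at hall
        obtain ⟨b₀, hb₀, hb₀n⟩ := hall
        have hrw : ∑ b ∈ Γ, (if ℓ b ∈ Finset.Ici (q b) then (1:ℝ) else 0)
            = ∑ b ∈ Γ.erase b₀, (if ℓ b ∈ Finset.Ici (q b) then (1:ℝ) else 0) := by
          rw [← Finset.add_sum_erase Γ _ hb₀]
          simp [hb₀n]
        have hle' : ∑ b ∈ Γ.erase b₀, (if ℓ b ∈ Finset.Ici (q b) then (1:ℝ) else 0)
            ≤ (Γ.erase b₀).card := by
          calc ∑ b ∈ Γ.erase b₀, (if ℓ b ∈ Finset.Ici (q b) then (1:ℝ) else 0)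
              ≤ ∑ _b ∈ Γ.erase b₀, (1:ℝ) :=
                Finset.sum_le_sum fun b _ => by split <;> norm_num
            _ = (Γ.erase b₀).card := by simp
        have hcard : ((Γ.erase b₀).card : ℝ) ≤ (Γ.card : ℝ) - 1 := by
          rw [Finset.card_erase_of_mem hb₀]
          have : 1 ≤ Γ.card := Finset.card_pos.mpr ⟨b₀, hb₀⟩
          push_cast [this]
          linarith
        have hif : (if ℓ β ∈ Finset.Iic lam then (1:ℝ) else 0) ≤ 1 := by
          split <;> norm_num
        rw [hrw]
        linarith
    · simp only [hβc, if_false]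
      linarith
end

section
/- Let n ≥ 1 and let q : {1,…,n} → {1,…,n+1} be nondecreasing. Let P be the polytope of all points (u, v, w) ∈ ℝ × ℝ^n × ℝ^n satisfying 0 ≤ u ≤ 1, 0 ≤ v_l ≤ 1 and 0 ≤ w_l ≤ 1 for all l ∈ {1,…,n}, and, for each λ ∈ {1,…,n}, the inequality u + ∑_{l=1}^{λ} v_l + ∑_{l=q(λ)}^{n} w_l ≤ 2 (where the last sum is empty if q(λ) = n+1). Then P equals the convex hull of its 0-1 points, i.e. P = conv(P ∩ {0,1}^{1+2n}). -/
open Finset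

/-- coordinate `j` in the linear order `v_{n-1}, …, v_0, u, w_{n-1}, …, w_0`. -/
noncomputable def GUBxc (n : ℕ) (p : ℝ × (Fin n → ℝ) × (Fin n → ℝ)) (j : ℕ) : ℝ :=
  if h : j < n then p.2.1 ⟨n - 1 - j, by omega⟩
  else if h1 : j = n then p.1
  else if h2 : j < 2 * n + 1 then p.2.2 ⟨2 * n - j, by omega⟩ else 0

/-- LHS of the cover inequality for level `lam`. -/
noncomputable def GUBlhs (n : ℕ) (q : Fin n → Fin (n + 1)) (lam : Fin n)
    (p : ℝ × (Fin n → ℝ) × (Fin n → ℝ)) : ℝ :=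
  p.1 + ∑ l ∈ Finset.Iic lam, p.2.1 l
    + ∑ l ∈ Finset.univ.filter (fun l : Fin n => (q lam : ℕ) ≤ (l : ℕ)), p.2.2 l

lemma GUBxc_v (n : ℕ) (p : ℝ × (Fin n → ℝ) × (Fin n → ℝ)) (l : Fin n) :
    GUBxc n p (n - 1 - (l : ℕ)) = p.2.1 l := by
  have hl := l.isLt
  rw [GUBxc, dif_pos (by omega)]
  have h2 : n - 1 - (n - 1 - (l : ℕ)) = (l : ℕ) := by omega
  simp only [h2, Fin.eta]

lemma GUBxc_u (n : ℕ) (p : ℝ × (Fin n → ℝ) × (Fin n → ℝ)) :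
    GUBxc n p n = p.1 := by
  rw [GUBxc, dif_neg (by omega), dif_pos rfl]

lemma GUBxc_w (n : ℕ) (p : ℝ × (Fin n → ℝ) × (Fin n → ℝ)) (l : Fin n) :
    GUBxc n p (2 * n - (l : ℕ)) = p.2.2 l := by
  have hl := l.isLt
  rw [GUBxc, dif_neg (by omega), dif_neg (by omega), dif_pos (by omega)]
  have h2 : 2 * n - (2 * n - (l : ℕ)) = (l : ℕ) := by omega
  simp only [h2, Fin.eta]

/-- The cover inequality LHS is the sum of coordinates over an interval. -/
lemma GUBlhs_eq_interval_sum (n : ℕ) (q : Fin n → Fin (n + 1)) (lam : Fin n)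
    (p : ℝ × (Fin n → ℝ) × (Fin n → ℝ)) :
    ∑ j ∈ Finset.Ico (n - 1 - (lam : ℕ)) (2 * n + 1 - (q lam : ℕ)), GUBxc n p j
      = GUBlhs n q lam p := by
  have hlam := lam.isLt
  have hqlam := (q lam).isLt
  have h1 : n - 1 - (lam : ℕ) ≤ n := by omega
  have h2 : n + 1 ≤ 2 * n + 1 - (q lam : ℕ) := by omega
  rw [← Finset.sum_Ico_consecutive _ (show n - 1 - (lam : ℕ) ≤ n + 1 by omega) h2,
    Finset.sum_Ico_succ_top h1]
  have hv : ∑ j ∈ Finset.Ico (n - 1 - (lam : ℕ)) n, GUBxc n p j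
      = ∑ l ∈ Finset.Iic lam, p.2.1 l := by
    refine Finset.sum_bij' (fun j hj => (⟨n - 1 - j, by simp [Finset.mem_Ico] at hj; omega⟩ : Fin n))
      (fun l _ => n - 1 - (l : ℕ)) ?_ ?_ ?_ ?_ ?_
    · intro a ha
      simp only [Finset.mem_Ico] at ha
      rw [Finset.mem_Iic, Fin.le_def]
      show n - 1 - a ≤ (lam : ℕ)
      omega
    · intro l hl
      have := l.isLt
      rw [Finset.mem_Iic, Fin.le_def] at hl
      simp only [Finset.mem_Ico]
      omega
    · intro a ha
      simp only [Finset.mem_Ico] at ha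
      show n - 1 - (n - 1 - a) = a
      omega
    · intro l hl
      have := l.isLt
      exact Fin.ext (show n - 1 - (n - 1 - (l : ℕ)) = (l : ℕ) by omega)
    · intro a ha
      simp only [Finset.mem_Ico] at ha
      rw [GUBxc, dif_pos (by omega)]
  have hw : ∑ j ∈ Finset.Ico (n + 1) (2 * n + 1 - (q lam : ℕ)), GUBxc n p j
      = ∑ l ∈ Finset.univ.filter (fun l : Fin n => (q lam : ℕ) ≤ (l : ℕ)), p.2.2 l := by
    refine Finset.sum_bij' (fun j hj => (⟨2 * n - j, by simp [Finset.mem_Ico] at hj; omega⟩ : Fin n))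
      (fun l _ => 2 * n - (l : ℕ)) ?_ ?_ ?_ ?_ ?_
    · intro a ha
      simp only [Finset.mem_Ico] at ha
      rw [Finset.mem_filter]
      refine ⟨Finset.mem_univ _, ?_⟩
      show (q lam : ℕ) ≤ 2 * n - a
      omega
    · intro l hl
      have := l.isLt
      rw [Finset.mem_filter] at hl
      simp only [Finset.mem_Ico]
      omega
    · intro a ha
      simp only [Finset.mem_Ico] at ha
      show 2 * n - (2 * n - a) = a
      omega
    · intro l hl
      have := l.isLt
      exact Fin.ext (show 2 * n - (2 * n - (l : ℕ)) = (l : ℕ) by omega)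
    · intro a ha
      simp only [Finset.mem_Ico] at ha
      rw [GUBxc, dif_neg (by omega), dif_neg (by omega), dif_pos (by omega)]
  rw [hv, hw, GUBxc_u, GUBlhs]
  ring

lemma GUBlhs_add (n : ℕ) (q : Fin n → Fin (n + 1)) (lam : Fin n)
    (p r : ℝ × (Fin n → ℝ) × (Fin n → ℝ)) :
    GUBlhs n q lam (p + r) = GUBlhs n q lam p + GUBlhs n q lam r := by
  simp only [GUBlhs, Prod.fst_add, Prod.snd_add, Pi.add_apply, Finset.sum_add_distrib]
  ring

lemma GUBlhs_smul (n : ℕ) (q : Fin n → Fin (n + 1)) (lam : Fin n)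
    (c : ℝ) (p : ℝ × (Fin n → ℝ) × (Fin n → ℝ)) :
    GUBlhs n q lam (c • p) = c * GUBlhs n q lam p := by
  simp only [GUBlhs, Prod.smul_fst, Prod.smul_snd, Pi.smul_apply, smul_eq_mul,
    ← Finset.mul_sum]
  ring

/-- partial sums of coordinates -/
noncomputable def GUBpsum (n : ℕ) (p : ℝ × (Fin n → ℝ) × (Fin n → ℝ)) (i : ℕ) : ℝ :=
  ∑ j ∈ Finset.range i, GUBxc n p j

lemma GUBpsum_succ_sub (n : ℕ) (p : ℝ × (Fin n → ℝ) × (Fin n → ℝ)) (j : ℕ) :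
    GUBpsum n p (j + 1) - GUBpsum n p j = GUBxc n p j := by
  rw [GUBpsum, GUBpsum, Finset.sum_range_succ]; ring

lemma GUBpsum_Ico (n : ℕ) (p : ℝ × (Fin n → ℝ) × (Fin n → ℝ)) {a b : ℕ} (h : a ≤ b) :
    ∑ j ∈ Finset.Ico a b, GUBxc n p j = GUBpsum n p b - GUBpsum n p a :=
  Finset.sum_Ico_eq_sub _ h

/-- edges of the prefix graph -/
def GUBedge (n : ℕ) (q : Fin n → Fin (n + 1)) (p : ℝ × (Fin n → ℝ) × (Fin n → ℝ))
    (a b : ℕ) : Prop :=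
  (b = a + 1 ∧ (GUBxc n p a = 0 ∨ GUBxc n p a = 1)) ∨
  (∃ lam : Fin n, GUBlhs n q lam p = 2 ∧ a = n - 1 - (lam : ℕ) ∧ b = 2 * n + 1 - (q lam : ℕ))

def GUBconn (n : ℕ) (q : Fin n → Fin (n + 1)) (p : ℝ × (Fin n → ℝ) × (Fin n → ℝ)) :
    ℕ → ℕ → Prop :=
  Relation.ReflTransGen (fun a b => GUBedge n q p a b ∨ GUBedge n q p b a)

lemma GUBconn_symm {n q p} {a b : ℕ} (h : GUBconn n q p a b) : GUBconn n q p b a :=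
  (@Relation.ReflTransGen.symmetric _ _ ⟨fun _ _ hab => hab.symm⟩).symm _ _ h

lemma GUBconn_trans {n q p} {a b c : ℕ} (h1 : GUBconn n q p a b) (h2 : GUBconn n q p b c) :
    GUBconn n q p a c := h1.trans h2

lemma GUBconn_of_edge {n q p} {a b : ℕ} (h : GUBedge n q p a b) : GUBconn n q p a b :=
  Relation.ReflTransGen.single (Or.inl h)

lemma GUBedge_diff_int {n q p} {a b : ℕ} (h : GUBedge n q p a b) :
    ∃ k : ℤ, GUBpsum n p b - GUBpsum n p a = k := by
  rcases h with ⟨hb, hx⟩ | ⟨lam, htight, ha, hb⟩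
  · subst hb
    rw [GUBpsum_succ_sub]
    rcases hx with h | h
    · exact ⟨0, by rw [h]; norm_num⟩
    · exact ⟨1, by rw [h]; norm_num⟩
  · subst ha hb
    have hlam := lam.isLt
    have hqlam := (q lam).isLt
    refine ⟨2, ?_⟩
    rw [← GUBpsum_Ico n p (by omega : n - 1 - (lam : ℕ) ≤ 2 * n + 1 - (q lam : ℕ)),
      GUBlhs_eq_interval_sum, htight]
    norm_num

lemma GUBconn_diff_int {n q p} {a b : ℕ} (h : GUBconn n q p a b) :
    ∃ k : ℤ, GUBpsum n p b - GUBpsum n p a = k := by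
  induction h with
  | refl => exact ⟨0, by norm_num⟩
  | tail _ hbc ih =>
    obtain ⟨k, hk⟩ := ih
    rcases hbc with he | he
    · obtain ⟨m, hm⟩ := GUBedge_diff_int he
      exact ⟨k + m, by push_cast; linarith⟩
    · obtain ⟨m, hm⟩ := GUBedge_diff_int he
      exact ⟨k - m, by push_cast; linarith⟩

def GUBset (n : ℕ) (q : Fin n → Fin (n + 1)) : Set (ℝ × (Fin n → ℝ) × (Fin n → ℝ)) :=
  {p | 0 ≤ p.1 ∧ p.1 ≤ 1 ∧
      (∀ l, 0 ≤ p.2.1 l ∧ p.2.1 l ≤ 1) ∧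
      (∀ l, 0 ≤ p.2.2 l ∧ p.2.2 l ≤ 1) ∧
      ∀ lam : Fin n, GUBlhs n q lam p ≤ 2}

lemma GUBbox {n : ℕ} {q : Fin n → Fin (n + 1)} {p : ℝ × (Fin n → ℝ) × (Fin n → ℝ)}
    (hp : p ∈ GUBset n q) : ∀ j ≤ 2 * n, 0 ≤ GUBxc n p j ∧ GUBxc n p j ≤ 1 := by
  obtain ⟨h0, h1, hv, hw, -⟩ := hp
  intro j hj
  rw [GUBxc]
  split
  · exact hv _
  · split
    · exact ⟨h0, h1⟩
    · split
      · exact hw _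
      · omega

lemma int01 {x : ℝ} (h0 : 0 ≤ x) (h1 : x ≤ 1) (k : ℤ) (hk : x = k) : x = 0 ∨ x = 1 := by
  have hk0 : (0 : ℤ) ≤ k := by exact_mod_cast hk ▸ h0
  have hk1 : k ≤ 1 := by exact_mod_cast hk ▸ h1
  interval_cases k
  · left; rw [hk]; norm_num
  · right; rw [hk]; norm_num

lemma GUB_extreme_int (n : ℕ) (q : Fin n → Fin (n + 1))
    (p : ℝ × (Fin n → ℝ) × (Fin n → ℝ)) (hpS : p ∈ GUBset n q)
    (hpext : ∀ x₁ ∈ GUBset n q, ∀ x₂ ∈ GUBset n q,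
      p ∈ openSegment ℝ x₁ x₂ → x₁ = p ∧ x₂ = p) :
    (p.1 = 0 ∨ p.1 = 1) ∧ (∀ l, p.2.1 l = 0 ∨ p.2.1 l = 1) ∧
      (∀ l, p.2.2 l = 0 ∨ p.2.2 l = 1) := by
  classical
  have hbox := GUBbox hpS
  by_cases hc : ∀ a ≤ 2 * n + 1, GUBconn n q p 0 a
  · -- connected case : all coordinates are integral
    have hint : ∀ j ≤ 2 * n, GUBxc n p j = 0 ∨ GUBxc n p j = 1 := by
      intro j hj
      have h1 : GUBconn n q p j (j + 1) :=
        GUBconn_trans (GUBconn_symm (hc j (by omega))) (hc (j + 1) (by omega))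
      obtain ⟨k, hk⟩ := GUBconn_diff_int h1
      rw [GUBpsum_succ_sub] at hk
      exact int01 (hbox j hj).1 (hbox j hj).2 k hk
    refine ⟨?_, fun l => ?_, fun l => ?_⟩
    · have := hint n (by omega)
      rwa [GUBxc_u] at this
    · have := hint (n - 1 - (l : ℕ)) (by have := l.isLt; omega)
      rwa [GUBxc_v] at this
    · have := hint (2 * n - (l : ℕ)) (by have := l.isLt; omega)
      rwa [GUBxc_w] at this
  · -- disconnected case : build a perturbation, contradicting extremality
    exfalso
    push_neg at hc
    obtain ⟨a0, ha0le, ha0⟩ := hc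
    set Sf : ℕ → ℝ := fun a => if GUBconn n q p a a0 then 1 else 0 with hSf
    set d : ℕ → ℝ := fun j => Sf (j + 1) - Sf j with hd
    have hSf01 : ∀ a, Sf a = 0 ∨ Sf a = 1 := by
      intro a; rw [hSf]; dsimp only; split <;> simp
    have habs : ∀ j, -1 ≤ d j ∧ d j ≤ 1 := by
      intro j
      rcases hSf01 (j + 1) with h1 | h1 <;> rcases hSf01 j with h2 | h2 <;>
        rw [hd] <;> dsimp only <;> rw [h1, h2] <;> norm_num
    have hSedge : ∀ a b : ℕ, GUBedge n q p a b → Sf a = Sf b := by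
      intro a b he
      have hconn := GUBconn_of_edge he
      rw [hSf]; dsimp only
      by_cases hca : GUBconn n q p a a0
      · rw [if_pos hca, if_pos (GUBconn_trans (GUBconn_symm hconn) hca)]
      · rw [if_neg hca, if_neg (fun hcb => hca (GUBconn_trans hconn hcb))]
    have hd_int : ∀ j, (GUBxc n p j = 0 ∨ GUBxc n p j = 1) → d j = 0 := by
      intro j hj
      have := hSedge j (j + 1) (Or.inl ⟨rfl, hj⟩)
      rw [hd]; dsimp only; rw [this]; ring
    -- the perturbation vector
    set D : ℝ × (Fin n → ℝ) × (Fin n → ℝ) :=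
      (d n, fun l => d (n - 1 - (l : ℕ)), fun l => d (2 * n - (l : ℕ))) with hD
    have hxD : ∀ j ≤ 2 * n, GUBxc n D j = d j := by
      intro j hj
      rw [GUBxc]
      split
      · rename_i h
        show d (n - 1 - (n - 1 - j)) = d j
        congr 1; omega
      · split
        · rename_i h1 h2
          subst h2; rfl
        · split
          · rename_i h1 h2 h3
            show d (2 * n - (2 * n - j)) = d j
            congr 1; omega
          · omega
    have hrowD : ∀ lam : Fin n,
        GUBlhs n q lam D = Sf (2 * n + 1 - (q lam : ℕ)) - Sf (n - 1 - (lam : ℕ)) := by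
      intro lam
      have hlam := lam.isLt
      have hqlam := (q lam).isLt
      rw [← GUBlhs_eq_interval_sum]
      have hcg : ∑ j ∈ Finset.Ico (n - 1 - (lam : ℕ)) (2 * n + 1 - (q lam : ℕ)), GUBxc n D j
          = ∑ j ∈ Finset.Ico (n - 1 - (lam : ℕ)) (2 * n + 1 - (q lam : ℕ)), d j := by
        refine Finset.sum_congr rfl (fun j hj => ?_)
        rw [Finset.mem_Ico] at hj
        exact hxD j (by omega)
      rw [hcg]
      rw [Finset.sum_Ico_eq_sub _ (by omega : n - 1 - (lam : ℕ) ≤ 2 * n + 1 - (q lam : ℕ))]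
      have htel : ∀ m : ℕ, ∑ j ∈ Finset.range m, d j = Sf m - Sf 0 := by
        intro m
        rw [hd]
        exact Finset.sum_range_sub Sf m
      rw [htel, htel]; ring
    have hrow_tight : ∀ lam : Fin n, GUBlhs n q lam p = 2 → GUBlhs n q lam D = 0 := by
      intro lam ht
      rw [hrowD]
      have := hSedge _ _ (Or.inr ⟨lam, ht, rfl, rfl⟩)
      rw [this]; ring
    have hrowD_abs : ∀ lam : Fin n, -1 ≤ GUBlhs n q lam D ∧ GUBlhs n q lam D ≤ 1 := by
      intro lam
      rw [hrowD]
      rcases hSf01 (2 * n + 1 - (q lam : ℕ)) with h1 | h1 <;>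
        rcases hSf01 (n - 1 - (lam : ℕ)) with h2 | h2 <;> rw [h1, h2] <;> norm_num
    -- choice of the perturbation size ε
    set A : Finset ℝ :=
      ((Finset.range (2 * n + 1)).image fun j =>
        if GUBxc n p j = 0 ∨ GUBxc n p j = 1 then 1
        else min (GUBxc n p j) (1 - GUBxc n p j)) ∪
      ((Finset.univ : Finset (Fin n)).image fun lam =>
        if GUBlhs n q lam p = 2 then 1 else 2 - GUBlhs n q lam p) ∪ {1} with hA
    have h1A : (1 : ℝ) ∈ A := by
      rw [hA]
      exact Finset.mem_union_right _ (Finset.mem_singleton_self 1)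
    have hAne : A.Nonempty := ⟨1, h1A⟩
    set ε : ℝ := A.min' hAne with hε
    have hεpos : 0 < ε := by
      have hεmem := A.min'_mem hAne
      rcases Finset.mem_union.mp hεmem with h | h
      · rcases Finset.mem_union.mp h with h | h
        · obtain ⟨j, hj, hval⟩ := Finset.mem_image.mp h
          rw [Finset.mem_range] at hj
          rw [hε, ← hval]
          split
          · norm_num
          · rename_i hni
            push_neg at hni
            have hb := hbox j (by omega)
            rw [lt_min_iff]
            constructor
            · exact lt_of_le_of_ne hb.1 (Ne.symm hni.1)
            · have := lt_of_le_of_ne hb.2 hni.2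
              linarith
        · obtain ⟨lam, -, hval⟩ := Finset.mem_image.mp h
          rw [hε, ← hval]
          split
          · norm_num
          · rename_i hnt
            have := hpS.2.2.2.2 lam
            have : GUBlhs n q lam p < 2 := lt_of_le_of_ne this hnt
            linarith
      · rw [Finset.mem_singleton] at h
        rw [hε, h]; norm_num
    have hεle_box : ∀ j ≤ 2 * n, ¬(GUBxc n p j = 0 ∨ GUBxc n p j = 1) →
        ε ≤ GUBxc n p j ∧ ε ≤ 1 - GUBxc n p j := by
      intro j hj hni
      have hm : (if GUBxc n p j = 0 ∨ GUBxc n p j = 1 then (1:ℝ)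
          else min (GUBxc n p j) (1 - GUBxc n p j)) ∈ A := by
        rw [hA]
        exact Finset.mem_union_left _ (Finset.mem_union_left _
          (Finset.mem_image.mpr ⟨j, Finset.mem_range.mpr (by omega), rfl⟩))
      rw [if_neg hni] at hm
      have := A.min'_le _ hm
      rw [← hε] at this
      exact ⟨this.trans (min_le_left _ _), this.trans (min_le_right _ _)⟩
    have hεle_row : ∀ lam : Fin n, GUBlhs n q lam p ≠ 2 → ε ≤ 2 - GUBlhs n q lam p := by
      intro lam hnt
      have hm : (if GUBlhs n q lam p = 2 then (1:ℝ) else 2 - GUBlhs n q lam p) ∈ A := by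
        rw [hA]
        exact Finset.mem_union_left _ (Finset.mem_union_right _
          (Finset.mem_image.mpr ⟨lam, Finset.mem_univ _, rfl⟩))
      rw [if_neg hnt] at hm
      have := A.min'_le _ hm
      rw [← hε] at this
      exact this
    -- membership of the perturbed points
    have hmem : ∀ s : ℝ, s = 1 ∨ s = -1 → p + (s * ε) • D ∈ GUBset n q := by
      intro s hs
      have key : ∀ j ≤ 2 * n, 0 ≤ GUBxc n p j + (s * ε) * d j ∧
          GUBxc n p j + (s * ε) * d j ≤ 1 := by
        intro j hj
        by_cases hji : GUBxc n p j = 0 ∨ GUBxc n p j = 1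
        · rw [hd_int j hji, mul_zero, add_zero]
          exact hbox j hj
        · have hm := hεle_box j hj hji
          have habsj := habs j
          rcases hs with h | h <;> subst h <;> constructor <;>
            nlinarith [mul_le_mul_of_nonneg_left habsj.2 hεpos.le,
              mul_le_mul_of_nonneg_left habsj.1 hεpos.le, hm.1, hm.2, (hbox j hj).1,
              (hbox j hj).2]
      have hc1 : (p + (s * ε) • D).1 = p.1 + (s * ε) * d n := by
        rw [hD]; simp
      have hc2 : ∀ l : Fin n, (p + (s * ε) • D).2.1 l = p.2.1 l + (s * ε) * d (n - 1 - (l : ℕ)) := by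
        intro l; rw [hD]; simp
      have hc3 : ∀ l : Fin n, (p + (s * ε) • D).2.2 l = p.2.2 l + (s * ε) * d (2 * n - (l : ℕ)) := by
        intro l; rw [hD]; simp
      refine ⟨?_, ?_, fun l => ?_, fun l => ?_, fun lam => ?_⟩
      · rw [hc1]
        have := (key n (by omega)).1
        rwa [GUBxc_u] at this
      · rw [hc1]
        have := (key n (by omega)).2
        rwa [GUBxc_u] at this
      · rw [hc2]
        have h1 := (key (n - 1 - (l : ℕ)) (by have := l.isLt; omega))
        rw [GUBxc_v] at h1
        exact h1
      · rw [hc3]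
        have h1 := (key (2 * n - (l : ℕ)) (by have := l.isLt; omega))
        rw [GUBxc_w] at h1
        exact h1
      · rw [GUBlhs_add, GUBlhs_smul]
        by_cases ht : GUBlhs n q lam p = 2
        · rw [hrow_tight lam ht, ht]
          norm_num
        · have h1 := hεle_row lam ht
          have h2 := hrowD_abs lam
          have h3 := hpS.2.2.2.2 lam
          rcases hs with h | h <;> subst h <;>
            nlinarith [mul_le_mul_of_nonneg_left h2.2 hεpos.le,
              mul_le_mul_of_nonneg_left h2.1 hεpos.le]
    have hy := hmem 1 (Or.inl rfl)
    have hz := hmem (-1) (Or.inr rfl)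
    have hseg : p ∈ openSegment ℝ (p + (1 * ε) • D) (p + ((-1) * ε) • D) := by
      refine ⟨1/2, 1/2, by norm_num, by norm_num, by norm_num, ?_⟩
      module
    obtain ⟨hy1, -⟩ := hpext _ hy _ hz hseg
    -- but the direction D is nonzero, contradiction
    have hD0 : D = 0 := by
      have h0 : (1 * ε) • D = 0 := by
        have := hy1
        rwa [add_eq_left] at this
      rcases smul_eq_zero.mp h0 with h | h
      · exfalso; rw [one_mul] at h; exact hεpos.ne' h
      · exact h
    have hSf0 : Sf 0 = 0 := by
      rw [hSf]; dsimp only; rw [if_neg ha0]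
    have hSfa0 : Sf a0 = 1 := by
      rw [hSf]; dsimp only; rw [if_pos (show GUBconn n q p a0 a0 from Relation.ReflTransGen.refl)]
    have hsum : ∑ j ∈ Finset.range a0, d j = 1 := by
      rw [hd]
      rw [Finset.sum_range_sub Sf a0, hSf0, hSfa0]
      ring
    have hex : ∃ j ∈ Finset.range a0, d j ≠ 0 := by
      by_contra hcon
      push_neg at hcon
      rw [Finset.sum_eq_zero hcon] at hsum
      norm_num at hsum
    obtain ⟨j0, hj0mem, hj0ne⟩ := hex
    rw [Finset.mem_range] at hj0mem
    have hdj0 : d j0 = 0 := by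
      have h1 : GUBxc n D j0 = d j0 := hxD j0 (by omega)
      rw [hD0] at h1
      rw [← h1]
      rw [GUBxc]
      split
      · simp
      · split
        · simp
        · split
          · simp
          · rfl
    exact hj0ne hdj0

lemma GUBset_convex (n : ℕ) (q : Fin n → Fin (n + 1)) : Convex ℝ (GUBset n q) := by
  intro x hx y hy a b ha hb hab
  obtain ⟨hx0, hx1, hxv, hxw, hxr⟩ := hx
  obtain ⟨hy0, hy1, hyv, hyw, hyr⟩ := hy
  have hc1 : (a • x + b • y).1 = a * x.1 + b * y.1 := by simp
  have hc2 : ∀ l : Fin n, (a • x + b • y).2.1 l = a * x.2.1 l + b * y.2.1 l := by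
    intro l; simp
  have hc3 : ∀ l : Fin n, (a • x + b • y).2.2 l = a * x.2.2 l + b * y.2.2 l := by
    intro l; simp
  refine ⟨?_, ?_, fun l => ?_, fun l => ?_, fun lam => ?_⟩
  · rw [hc1]; nlinarith
  · rw [hc1]; nlinarith
  · rw [hc2]
    have h1 := hxv l; have h2 := hyv l
    constructor <;> nlinarith
  · rw [hc3]
    have h1 := hxw l; have h2 := hyw l
    constructor <;> nlinarith
  · rw [GUBlhs_add, GUBlhs_smul, GUBlhs_smul]
    have h1 := hxr lam; have h2 := hyr lam
    nlinarith

lemma GUBset_isClosed (n : ℕ) (q : Fin n → Fin (n + 1)) : IsClosed (GUBset n q) := by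
  have hcv : ∀ l : Fin n, Continuous fun p : ℝ × (Fin n → ℝ) × (Fin n → ℝ) => p.2.1 l :=
    fun l => (continuous_apply l).comp (continuous_fst.comp continuous_snd)
  have hcw : ∀ l : Fin n, Continuous fun p : ℝ × (Fin n → ℝ) × (Fin n → ℝ) => p.2.2 l :=
    fun l => (continuous_apply l).comp (continuous_snd.comp continuous_snd)
  have h1 : IsClosed {p : ℝ × (Fin n → ℝ) × (Fin n → ℝ) | 0 ≤ p.1} :=
    isClosed_le continuous_const continuous_fst
  have h2 : IsClosed {p : ℝ × (Fin n → ℝ) × (Fin n → ℝ) | p.1 ≤ 1} :=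
    isClosed_le continuous_fst continuous_const
  have h3 : IsClosed {p : ℝ × (Fin n → ℝ) × (Fin n → ℝ) | ∀ l, 0 ≤ p.2.1 l ∧ p.2.1 l ≤ 1} := by
    rw [Set.setOf_forall]
    refine isClosed_iInter fun l => ?_
    rw [Set.setOf_and]
    exact (isClosed_le continuous_const (hcv l)).inter (isClosed_le (hcv l) continuous_const)
  have h4 : IsClosed {p : ℝ × (Fin n → ℝ) × (Fin n → ℝ) | ∀ l, 0 ≤ p.2.2 l ∧ p.2.2 l ≤ 1} := by
    rw [Set.setOf_forall]
    refine isClosed_iInter fun l => ?_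
    rw [Set.setOf_and]
    exact (isClosed_le continuous_const (hcw l)).inter (isClosed_le (hcw l) continuous_const)
  have h5 : IsClosed {p : ℝ × (Fin n → ℝ) × (Fin n → ℝ) | ∀ lam, GUBlhs n q lam p ≤ 2} := by
    rw [Set.setOf_forall]
    refine isClosed_iInter fun lam => isClosed_le ?_ continuous_const
    unfold GUBlhs
    fun_prop
  have : GUBset n q = {p : ℝ × (Fin n → ℝ) × (Fin n → ℝ) | 0 ≤ p.1} ∩
      ({p | p.1 ≤ 1} ∩ ({p | ∀ l, 0 ≤ p.2.1 l ∧ p.2.1 l ≤ 1} ∩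
      ({p | ∀ l, 0 ≤ p.2.2 l ∧ p.2.2 l ≤ 1} ∩ {p | ∀ lam, GUBlhs n q lam p ≤ 2}))) := by
    ext p
    simp only [GUBset, Set.mem_setOf_eq, Set.mem_inter_iff]
  rw [this]
  exact h1.inter (h2.inter (h3.inter (h4.inter h5)))

lemma GUBset_isCompact (n : ℕ) (q : Fin n → Fin (n + 1)) : IsCompact (GUBset n q) := by
  refine Metric.isCompact_of_isClosed_isBounded (GUBset_isClosed n q) ?_
  refine (Metric.isBounded_closedBall (x := (0 : ℝ × (Fin n → ℝ) × (Fin n → ℝ))) (r := 1)).subset ?_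
  intro p hp
  obtain ⟨h0, h1, hv, hw, -⟩ := hp
  rw [Metric.mem_closedBall, dist_zero_right, Prod.norm_def, Prod.norm_def]
  refine max_le ?_ (max_le ?_ ?_)
  · rw [Real.norm_eq_abs, abs_le]; constructor <;> linarith
  · refine pi_norm_le_iff_of_nonneg (by norm_num) |>.mpr fun l => ?_
    rw [Real.norm_eq_abs, abs_le]
    have := hv l
    constructor <;> linarith [this.1, this.2]
  · refine pi_norm_le_iff_of_nonneg (by norm_num) |>.mpr fun l => ?_
    rw [Real.norm_eq_abs, abs_le]
    have := hw l
    constructor <;> linarith [this.1, this.2]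

/-- **The single-interferer GUB knapsack polytope is integral.**
For `n ≥ 1` and a nondecreasing map `q : Fin n → Fin (n+1)` (level `j` of the
interferer is denied iff `q lam ≤ j`, where `q lam = n` means no level), the
polytope of points `(u, v, w)` satisfying the box constraints and the
non-dominated GUB cover inequalities
`u + ∑_{l ≤ lam} v l + ∑_{l ≥ q lam} w l ≤ 2` for every `lam`
equals the convex hull of its 0-1 points. -/
theorem single_interferer_polytope_is_integral
    (n : ℕ) (hn : 1 ≤ n) (q : Fin n → Fin (n + 1)) (hq : Monotone q)
    (S : Set (ℝ × (Fin n → ℝ) × (Fin n → ℝ)))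
    (hS : S = {p | 0 ≤ p.1 ∧ p.1 ≤ 1 ∧
      (∀ l, 0 ≤ p.2.1 l ∧ p.2.1 l ≤ 1) ∧
      (∀ l, 0 ≤ p.2.2 l ∧ p.2.2 l ≤ 1) ∧
      ∀ lam : Fin n,
        p.1 + ∑ l ∈ Finset.Iic lam, p.2.1 l
          + ∑ l ∈ Finset.univ.filter (fun l : Fin n => (q lam : ℕ) ≤ (l : ℕ)), p.2.2 l
          ≤ 2}) :
    S = convexHull ℝ (S ∩ {p : ℝ × (Fin n → ℝ) × (Fin n → ℝ) |
      (p.1 = 0 ∨ p.1 = 1) ∧ (∀ l, p.2.1 l = 0 ∨ p.2.1 l = 1) ∧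
      (∀ l, p.2.2 l = 0 ∨ p.2.2 l = 1)}) := by
  classical
  have hSG : S = GUBset n q := by
    rw [hS]; rfl
  set I : Set (ℝ × (Fin n → ℝ) × (Fin n → ℝ)) := {p : ℝ × (Fin n → ℝ) × (Fin n → ℝ) |
      (p.1 = 0 ∨ p.1 = 1) ∧ (∀ l, p.2.1 l = 0 ∨ p.2.1 l = 1) ∧
      (∀ l, p.2.2 l = 0 ∨ p.2.2 l = 1)} with hI
  have hconv : Convex ℝ S := hSG ▸ GUBset_convex n q
  have hcomp : IsCompact S := hSG ▸ GUBset_isCompact n q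
  have hIfin : I.Finite := by
    have h01 : ({0, 1} : Set ℝ).Finite := (Set.finite_singleton 1).insert 0
    refine Set.Finite.subset (h01.prod ((Set.Finite.pi fun _ : Fin n => h01).prod
      (Set.Finite.pi fun _ : Fin n => h01))) ?_
    rintro p ⟨h1, h2, h3⟩
    refine ⟨h1, fun l _ => h2 l, fun l _ => h3 l⟩
  have hfin : (S ∩ I).Finite := hIfin.subset Set.inter_subset_right
  have hext : S.extremePoints ℝ ⊆ S ∩ I := by
    intro x hx
    rw [hSG] at hx
    refine ⟨hSG ▸ hx.1, ?_⟩
    exact GUB_extreme_int n q x hx.1 (fun x₁ h₁ x₂ h₂ hs =>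
      ⟨hx.2 h₁ h₂ hs, hx.2 h₂ h₁ (by rw [openSegment_symm]; exact hs)⟩)
  refine Set.Subset.antisymm ?_ (convexHull_min Set.inter_subset_left hconv)
  have h1 : S = closure (convexHull ℝ (S.extremePoints ℝ)) :=
    (closure_convexHull_extremePoints hcomp hconv).symm
  have h2 : closure (convexHull ℝ (S.extremePoints ℝ)) ⊆ closure (convexHull ℝ (S ∩ I)) :=
    closure_mono (convexHull_mono hext)
  have h3 : closure (convexHull ℝ (S ∩ I)) = convexHull ℝ (S ∩ I) :=
    (Set.Finite.isClosed_convexHull ℝ hfin).closure_eq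
  calc S ⊆ closure (convexHull ℝ (S.extremePoints ℝ)) := h1.subset
    _ ⊆ closure (convexHull ℝ (S ∩ I)) := h2
    _ = convexHull ℝ (S ∩ I) := h3
end

section
/- Let N be a finite set partitioned into pairwise disjoint blocks {S_i}_{i ∈ I} together with one additional disjoint block S_0, let a_j > 0 for all j ∈ N ∪ S_0 and d ∈ ℝ. Let y : N ∪ S_0 → {0,1} satisfy the knapsack constraint ∑_{j ∈ N} a_j y_j − ∑_{j ∈ S_0} a_j y_j ≤ d and the GUB constraints ∑_{j ∈ S_i} y_j ≤ 1 for each i ∈ I and ∑_{j ∈ S_0} y_j ≤ 1. Suppose there is a subset I⁺ ⊆ I, elements c_i ∈ S_i for each i ∈ I⁺, and an element c_0 ∈ S_0 such that ∑_{i ∈ I⁺} a_{c_i} − a_{c_0} > d (a GUB cover). Then the GUB cover inequality ∑_{i ∈ I⁺} ∑_{j ∈ S_i : a_j ≥ a_{c_i}} y_j + ∑_{j ∈ S_0 : a_j ≤ a_{c_0}} y_j ≤ |I⁺| holds. -/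
open Finset

/-- **Wolsey's GUB cover inequality for a single negative block.**
A finite set `N` is partitioned into pairwise disjoint blocks `S i` (`i : ι`);
`S0` is one additional disjoint block; `a j > 0` on `N ∪ S0`.  If a 0-1 point
`y` satisfies the knapsack constraint `∑_{j ∈ N} a j * y j - ∑_{j ∈ S0} a j * y j ≤ d`
and the GUB constraints, and if `I⁺ ⊆ ι` with chosen elements `c i ∈ S i` and
`c0 ∈ S0` form a GUB cover (`∑_{i ∈ I⁺} a (c i) - a c0 > d`), then the lifted
GUB cover inequality holds. -/
theorem wolsey_gub_cover_inequality
    {ι J : Type*} [Fintype ι] [DecidableEq ι] [DecidableEq J]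
    (S : ι → Finset J) (S0 : Finset J)
    (hdisj : ∀ i i' : ι, i ≠ i' → Disjoint (S i) (S i'))
    (hdisj0 : ∀ i : ι, Disjoint (S i) S0)
    (N : Finset J) (hN : N = Finset.univ.biUnion S)
    (a : J → ℝ) (ha : ∀ j ∈ N ∪ S0, 0 < a j) (d : ℝ)
    (y : J → ℝ) (hy01 : ∀ j ∈ N ∪ S0, y j = 0 ∨ y j = 1)
    (hknap : ∑ j ∈ N, a j * y j - ∑ j ∈ S0, a j * y j ≤ d)
    (hgub : ∀ i : ι, ∑ j ∈ S i, y j ≤ 1) (hgub0 : ∑ j ∈ S0, y j ≤ 1)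
    (Ip : Finset ι) (c : ι → J) (hc : ∀ i ∈ Ip, c i ∈ S i)
    (c0 : J) (hc0 : c0 ∈ S0)
    (hcover : ∑ i ∈ Ip, a (c i) - a c0 > d) :
    ∑ i ∈ Ip, ∑ j ∈ (S i).filter (fun j => a (c i) ≤ a j), y j
      + ∑ j ∈ S0.filter (fun j => a j ≤ a c0), y j ≤ Ip.card := by
  have hy0 : ∀ j ∈ N ∪ S0, 0 ≤ y j := fun j hj => by
    rcases hy01 j hj with h | h <;> simp [h]
  have hSN : ∀ i, S i ⊆ N := fun i => by
    rw [hN]; exact Finset.subset_biUnion_of_mem S (Finset.mem_univ i)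
  set z : ι → ℝ := fun i => ∑ j ∈ (S i).filter (fun j => a (c i) ≤ a j), y j with hzdef
  set z0 : ℝ := ∑ j ∈ S0.filter (fun j => a j ≤ a c0), y j with hz0def
  have hz1 : ∀ i ∈ Ip, z i ≤ 1 := by
    intro i _
    calc z i ≤ ∑ j ∈ S i, y j :=
          Finset.sum_le_sum_of_subset_of_nonneg (Finset.filter_subset _ _)
            (fun j hj _ => hy0 j (Finset.mem_union_left _ (hSN i hj)))
      _ ≤ 1 := hgub i
  have hz01 : z0 ≤ 1 := by
    calc z0 ≤ ∑ j ∈ S0, y j :=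
          Finset.sum_le_sum_of_subset_of_nonneg (Finset.filter_subset _ _)
            (fun j hj _ => hy0 j (Finset.mem_union_right _ hj))
      _ ≤ 1 := hgub0
  by_contra hcon
  push_neg at hcon
  have hsum1 : ∑ i ∈ Ip, z i ≤ (Ip.card : ℝ) := by
    calc ∑ i ∈ Ip, z i ≤ ∑ _i ∈ Ip, (1 : ℝ) := Finset.sum_le_sum hz1
      _ = Ip.card := by simp
  have hz0pos : 0 < z0 := by linarith
  obtain ⟨j0, hj0mem, hj0pos⟩ : ∃ j0 ∈ S0.filter (fun j => a j ≤ a c0), 0 < y j0 := by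
    by_contra h
    push_neg at h
    have : z0 ≤ 0 := Finset.sum_nonpos h
    linarith
  obtain ⟨hj0S, hj0a⟩ := Finset.mem_filter.mp hj0mem
  have hj0one : y j0 = 1 := by
    rcases hy01 j0 (Finset.mem_union_right _ hj0S) with h | h
    · linarith
    · exact h
  have hzpos : ∀ i ∈ Ip, 0 < z i := by
    intro i hi
    by_contra h
    push_neg at h
    have herased : ∑ i' ∈ Ip.erase i, z i' ≤ ((Ip.erase i).card : ℝ) := by
      calc ∑ i' ∈ Ip.erase i, z i' ≤ ∑ _i ∈ Ip.erase i, (1 : ℝ) :=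
            Finset.sum_le_sum (fun i' hi' => hz1 i' (Finset.mem_of_mem_erase hi'))
        _ = (Ip.erase i).card := by simp
    have hcardE : ((Ip.erase i).card : ℝ) = (Ip.card : ℝ) - 1 := by
      rw [Finset.card_erase_of_mem hi]
      have : 1 ≤ Ip.card := Finset.card_pos.mpr ⟨i, hi⟩
      push_cast [Nat.cast_sub this]
      ring
    have hsplit : ∑ i' ∈ Ip, z i' = z i + ∑ i' ∈ Ip.erase i, z i' :=
      (Finset.add_sum_erase _ z hi).symm
    linarith
  -- bound knapsack from below on N
  have hNsum : ∑ j ∈ N, a j * y j = ∑ i : ι, ∑ j ∈ S i, a j * y j := by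
    rw [hN]
    exact Finset.sum_biUnion (fun i _ i' _ h => hdisj i i' h)
  have hinner : ∀ i ∈ Ip, a (c i) ≤ ∑ j ∈ S i, a j * y j := by
    intro i hi
    obtain ⟨j', hj'mem, hj'pos⟩ : ∃ j' ∈ (S i).filter (fun j => a (c i) ≤ a j), 0 < y j' := by
      by_contra h
      push_neg at h
      have : z i ≤ 0 := Finset.sum_nonpos h
      linarith [hzpos i hi]
    obtain ⟨hj'S, hj'a⟩ := Finset.mem_filter.mp hj'mem
    have hj'one : y j' = 1 := by
      rcases hy01 j' (Finset.mem_union_left _ (hSN i hj'S)) with h | h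
      · linarith
      · exact h
    calc a (c i) ≤ a j' * y j' := by rw [hj'one]; linarith
      _ ≤ ∑ j ∈ S i, a j * y j :=
          Finset.single_le_sum (fun j hj => mul_nonneg
            (le_of_lt (ha j (Finset.mem_union_left _ (hSN i hj))))
            (hy0 j (Finset.mem_union_left _ (hSN i hj)))) hj'S
  have hNlb : ∑ i ∈ Ip, a (c i) ≤ ∑ j ∈ N, a j * y j := by
    rw [hNsum]
    calc ∑ i ∈ Ip, a (c i) ≤ ∑ i ∈ Ip, ∑ j ∈ S i, a j * y j := Finset.sum_le_sum hinner
      _ ≤ ∑ i : ι, ∑ j ∈ S i, a j * y j :=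
          Finset.sum_le_sum_of_subset_of_nonneg (Finset.subset_univ Ip)
            (fun i _ _ => Finset.sum_nonneg (fun j hj => mul_nonneg
              (le_of_lt (ha j (Finset.mem_union_left _ (hSN i hj))))
              (hy0 j (Finset.mem_union_left _ (hSN i hj)))))
  -- bound S0 sum from above
  have hothers : ∀ j ∈ S0.erase j0, y j = 0 := by
    have hsplit : ∑ j ∈ S0, y j = y j0 + ∑ j ∈ S0.erase j0, y j :=
      (Finset.add_sum_erase _ y hj0S).symm
    have hle : ∑ j ∈ S0.erase j0, y j ≤ 0 := by
      rw [hsplit, hj0one] at hgub0; linarith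
    have heq : ∑ j ∈ S0.erase j0, y j = 0 :=
      le_antisymm hle (Finset.sum_nonneg (fun j hj =>
        hy0 j (Finset.mem_union_right _ (Finset.mem_of_mem_erase hj))))
    intro j hj
    exact (Finset.sum_eq_zero_iff_of_nonneg (fun j hj =>
      hy0 j (Finset.mem_union_right _ (Finset.mem_of_mem_erase hj)))).mp heq j hj
  have hS0ub : ∑ j ∈ S0, a j * y j ≤ a c0 := by
    have hsplit : ∑ j ∈ S0, a j * y j = a j0 * y j0 + ∑ j ∈ S0.erase j0, a j * y j :=
      (Finset.add_sum_erase _ _ hj0S).symm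
    have hzero : ∑ j ∈ S0.erase j0, a j * y j = 0 :=
      Finset.sum_eq_zero (fun j hj => by rw [hothers j hj, mul_zero])
    rw [hsplit, hzero, hj0one]
    linarith
  linarith
end

section
/- Let B be a finite set with β ∈ B, power values 0 = P_1 ≤ … ≤ P_n, fading coefficients a_b > 0, δ ∈ ℝ, and let (x*, z*) with x* ∈ ℝ and z* : B × {1,…,n} → ℝ≥0 satisfying ∑_{l=1}^{n} z*_{b,l} = 1 for all b ∈ B. Define, over vectors u : B × {1,…,n} → ℝ with u ≥ 0, ∑_{l} u_{b,l} = 1 for all b ∈ B, and ∑_{b ≠ β} a_b ∑_{l} P_l u_{b,l} − a_β ∑_{l} P_l u_{β,l} ≥ δ, the objective f(u) = ∑_{l} u_{β,l} ∑_{k=1}^{l} z*_{β,k} + ∑_{b ≠ β} ∑_{l} u_{b,l} (∑_{k=l}^{n} z*_{b,k} − 1), and let Z be its supremum over this feasible region. If Z ≤ 1 − x*, then no GUB cover inequality is violated by (x*, z*): for every nonempty Γ = {b_1,…,b_k} ⊆ B∖{β}, every λ ∈ {1,…,n}, and every tuple (q_1,…,q_k) with ∑_{i=1}^{k} a_{b_i}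 P_{q_i} − a_β P_λ > δ, one has x* + ∑_{l=1}^{λ} z*_{β,l} + ∑_{i=1}^{k} ∑_{j=q_i}^{n} z*_{b_i,j} ≤ k + 1. -/
open Finset

/-- **Soundness of the separation LP (SEP).**  Let `(xs, zs)` be a (possibly
fractional) point with `zs ≥ 0` and `∑_l zs b l = 1` for every transmitter
`b`.  Let `Z` be the supremum of the SEP objective over the feasible region
(nonnegative `u` with unit GUB sums satisfying the cover knapsack condition).
If `Z ≤ 1 - xs`, then `(xs, zs)` satisfies every GUB cover inequality. -/
theorem separation_LP_sound
    {B : Type*} [Fintype B] [DecidableEq B] (β : B) (n : ℕ) (hn : 0 < n)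
    (P : Fin n → ℝ) (hP1 : P ⟨0, hn⟩ = 0) (hPmono : Monotone P)
    (a : B → ℝ) (ha : ∀ b, 0 < a b) (δ : ℝ)
    (xs : ℝ) (zs : B → Fin n → ℝ) (hzs : ∀ b l, 0 ≤ zs b l)
    (hgub : ∀ b, ∑ l, zs b l = 1)
    (Z : ℝ)
    (hZ : IsLUB ((fun u : B → Fin n → ℝ =>
        ∑ l, u β l * (∑ k ∈ Finset.Iic l, zs β k) +
          ∑ b ∈ Finset.univ.erase β, ∑ l,
            u b l * ((∑ k ∈ Finset.Ici l, zs b k) - 1)) ''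
      {u : B → Fin n → ℝ | (∀ b l, 0 ≤ u b l) ∧ (∀ b, ∑ l, u b l = 1) ∧
        ∑ b ∈ Finset.univ.erase β, a b * ∑ l, P l * u b l
          - a β * ∑ l, P l * u β l ≥ δ}) Z)
    (hZle : Z ≤ 1 - xs) :
    ∀ Γ : Finset B, Γ.Nonempty → β ∉ Γ →
      ∀ lam : Fin n, ∀ q : B → Fin n,
        ∑ b ∈ Γ, a b * P (q b) - a β * P lam > δ →
        xs + ∑ l ∈ Finset.Iic lam, zs β l
          + ∑ b ∈ Γ, ∑ j ∈ Finset.Ici (q b), zs b j ≤ Γ.card + 1 := by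
  intro Γ hΓne hβΓ lam q hcov
  -- choose the index for each transmitter
  set c : B → Fin n := fun b => if b = β then lam else if b ∈ Γ then q b else ⟨0, hn⟩ with hc
  set u : B → Fin n → ℝ := fun b l => if l = c b then 1 else 0 with hu
  have hsum1 : ∀ b, ∑ l, u b l = 1 := by
    intro b; simp [hu]
  have hPsum : ∀ b, ∑ l, P l * u b l = P (c b) := by
    intro b; simp [hu, mul_ite]
  have hIci0 : (Finset.Ici (⟨0, hn⟩ : Fin n)) = Finset.univ := by
    apply Finset.eq_univ_iff_forall.mpr
    intro k; exact Finset.mem_Ici.mpr (by exact Fin.mk_le_of_le_val (Nat.zero_le _))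
  -- feasibility
  have hfeas : u ∈ {u : B → Fin n → ℝ | (∀ b l, 0 ≤ u b l) ∧ (∀ b, ∑ l, u b l = 1) ∧
        ∑ b ∈ Finset.univ.erase β, a b * ∑ l, P l * u b l
          - a β * ∑ l, P l * u β l ≥ δ} := by
    refine ⟨fun b l => by simp only [hu]; positivity, hsum1, ?_⟩
    have hcβ : c β = lam := by simp [hc]
    have h1 : ∑ b ∈ Finset.univ.erase β, a b * ∑ l, P l * u b l
        = ∑ b ∈ Γ, a b * P (q b) := by
      rw [← Finset.sum_subset (Finset.subset_erase.mpr ⟨Finset.subset_univ Γ, hβΓ⟩)]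
      · apply Finset.sum_congr rfl
        intro b hb
        have hbβ : b ≠ β := fun h => hβΓ (h ▸ hb)
        rw [hPsum]; simp [hc, hbβ, hb]
      · intro b hb hbΓ
        have hbβ : b ≠ β := Finset.ne_of_mem_erase hb
        rw [hPsum]; simp [hc, hbβ, hbΓ, hP1]
    rw [h1, hPsum, hcβ]
    exact le_of_lt hcov
  -- objective value
  have hobj : (∑ l, u β l * (∑ k ∈ Finset.Iic l, zs β k) +
          ∑ b ∈ Finset.univ.erase β, ∑ l,
            u b l * ((∑ k ∈ Finset.Ici l, zs b k) - 1))
      = (∑ k ∈ Finset.Iic lam, zs β k)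
        + (∑ b ∈ Γ, ((∑ k ∈ Finset.Ici (q b), zs b k) - 1)) := by
    have hA : ∑ l, u β l * (∑ k ∈ Finset.Iic l, zs β k)
        = ∑ k ∈ Finset.Iic lam, zs β k := by
      simp [hu, ite_mul, hc]
    have hB : ∑ b ∈ Finset.univ.erase β, ∑ l,
            u b l * ((∑ k ∈ Finset.Ici l, zs b k) - 1)
        = ∑ b ∈ Γ, ((∑ k ∈ Finset.Ici (q b), zs b k) - 1) := by
      rw [← Finset.sum_subset (Finset.subset_erase.mpr ⟨Finset.subset_univ Γ, hβΓ⟩)]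
      · apply Finset.sum_congr rfl
        intro b hb
        have hbβ : b ≠ β := fun h => hβΓ (h ▸ hb)
        simp [hu, ite_mul, hc, hbβ, hb]
      · intro b hb hbΓ
        have hbβ : b ≠ β := Finset.ne_of_mem_erase hb
        simp [hu, ite_mul, hc, hbβ, hbΓ, hIci0, hgub b]
    rw [hA, hB]
  have hle : (∑ k ∈ Finset.Iic lam, zs β k)
        + (∑ b ∈ Γ, ((∑ k ∈ Finset.Ici (q b), zs b k) - 1)) ≤ Z := by
    rw [← hobj]
    exact hZ.1 ⟨u, hfeas, rfl⟩
  have := hle.trans hZle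
  rw [Finset.sum_sub_distrib, Finset.sum_const, nsmul_eq_mul, mul_one] at this
  linarith
end
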